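/- For all ordinals δ₀, δ₁, η, α: if δ₀ ≪ δ₁ {η} then δ₀ # α ≪ δ₁ # α {η}. -/

import Mathlib

open Ordinal Set
universe u

noncomputable def Ordinal.nadd : Ordinal.{u} → Ordinal.{u} → Ordinal.{u}
  | a, b =>
    max (blsub.{u, u} a fun a' _ => nadd a' b) (blsub.{u, u} b fun b' _ => nadd a b')
termination_by o₁ o₂ => (o₁, o₂)

infixl:65 " ♯ " => Ordinal.nadd

noncomputable section

/-- A cardinal is weakly inaccessible: uncountable, regular, and a limit cardinal. -/
def WeaklyInaccessible (c : Cardinal) : Prop :=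
  Cardinal.aleph0 < c ∧ c.IsRegular ∧ ∀ x < c, Order.succ x < c

/-- `I` is (the initial ordinal of) the least weakly inaccessible cardinal. -/
def I : Ordinal := (sInf {c : Cardinal | WeaklyInaccessible c}).ord

/-- `Om α` is `Ω_α`: `0` for `α = 0` and the initial ordinal of `ℵ_α` otherwise. -/
def Om (α : Ordinal) : Ordinal := if α = 0 then 0 else (Cardinal.aleph α).ord

/-- `R = {Ω_{μ+1} : μ < I} ∪ {I}`. -/
def R : Set Ordinal := {o | (∃ μ < I, o = Om (μ + 1)) ∨ o = I}

/-- Given the family of hulls at earlier stages, the collapse `ψ_σ`. -/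
def psiOf (F : Set Ordinal → Set Ordinal) (σ : Ordinal) : Ordinal :=
  sInf ({β | β < σ ∧ σ ∈ F (Set.Iio β) ∧ F (Set.Iio β) ∩ Set.Iio σ ⊆ Set.Iio β} ∪ {σ})

instance : WellFoundedRelation Ordinal := ⟨(· < ·), Ordinal.lt_wf⟩

/-- `H α X` is the least set of ordinals containing `X ∪ {0, I}` and closed under
ordinal addition, `β ↦ ω^β`, `β ↦ Ω_β`, and `(σ, β) ↦ ψ_σ β` for `σ ∈ R` and `β < α`. -/
def H (α : Ordinal) (X : Set Ordinal) : Set Ordinal :=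
  ⋂₀ {Y : Set Ordinal | X ∪ {0, I} ⊆ Y ∧
      (∀ γ ∈ Y, ∀ δ ∈ Y, γ + δ ∈ Y) ∧
      (∀ γ ∈ Y, Ordinal.omega0 ^ γ ∈ Y) ∧
      (∀ γ ∈ Y, Om γ ∈ Y) ∧
      (∀ σ ∈ R, ∀ β ∈ Y, β < α → σ ∈ Y → psiOf (H β) σ ∈ Y)}
termination_by α
decreasing_by assumption

/-- The collapsing function `ψ_σ α`. -/
def psi (σ α : Ordinal) : Ordinal := psiOf (H α) σ

/-- The relation `δ₀ ≪ δ₁ {η}`. -/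
def llr (η δ₀ δ₁ : Ordinal) : Prop :=
  δ₀ < δ₁ ∧ ∀ σ ∈ R, ∀ α : Ordinal,
    δ₁ ∈ H α (Set.Iio (psi σ α)) → η ∈ H α (Set.Iio (psi σ α)) → δ₀ ∈ H α (Set.Iio (psi σ α))

namespace Ordinal

theorem nadd_def' (a b : Ordinal.{u}) : a ♯ b =
    max (blsub.{u, u} a fun a' _ => a' ♯ b) (blsub.{u, u} b fun b' _ => a ♯ b') := by
  rw [Ordinal.nadd]

theorem lt_nadd_iff {a b c : Ordinal.{u}} :
    a < b ♯ c ↔ (∃ b' < b, a ≤ b' ♯ c) ∨ ∃ c' < c, a ≤ b ♯ c' := by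
  rw [nadd_def']; simp [lt_blsub_iff]

theorem nadd_le_iff {a b c : Ordinal.{u}} :
    b ♯ c ≤ a ↔ (∀ b' < b, b' ♯ c < a) ∧ ∀ c' < c, b ♯ c' < a := by
  rw [nadd_def']; simp [blsub_le_iff]

theorem nadd_lt_nadd_left {b c : Ordinal} (h : b < c) (a : Ordinal) : a ♯ b < a ♯ c :=
  lt_nadd_iff.2 (Or.inr ⟨b, h, le_rfl⟩)

theorem nadd_lt_nadd_right {b c : Ordinal} (h : b < c) (a : Ordinal) : b ♯ a < c ♯ a :=
  lt_nadd_iff.2 (Or.inl ⟨b, h, le_rfl⟩)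

theorem nadd_le_nadd_left {b c : Ordinal} (h : b ≤ c) (a : Ordinal) : a ♯ b ≤ a ♯ c := by
  rcases lt_or_eq_of_le h with h | rfl
  · exact (nadd_lt_nadd_left h a).le
  · exact le_rfl

theorem nadd_le_nadd_right {b c : Ordinal} (h : b ≤ c) (a : Ordinal) : b ♯ a ≤ c ♯ a := by
  rcases lt_or_eq_of_le h with h | rfl
  · exact (nadd_lt_nadd_right h a).le
  · exact le_rfl

theorem nadd_lt_nadd {a b c d : Ordinal} (h₁ : a < b) (h₂ : c < d) : a ♯ c < b ♯ d :=
  (nadd_lt_nadd_left h₂ a).trans (nadd_lt_nadd_right h₁ d)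

theorem nadd_comm (a b : Ordinal) : a ♯ b = b ♯ a := by
  induction a using Ordinal.induction generalizing b with
  | _ a IHa =>
  induction b using Ordinal.induction with
  | _ b IHb =>
  apply le_antisymm
  · rw [nadd_le_iff]
    refine ⟨fun a' ha' => ?_, fun b' hb' => ?_⟩
    · rw [IHa a' ha']; exact nadd_lt_nadd_left ha' b
    · rw [IHb b' hb']; exact nadd_lt_nadd_right hb' a
  · rw [nadd_le_iff]
    refine ⟨fun b' hb' => ?_, fun a' ha' => ?_⟩
    · rw [← IHb b' hb']; exact nadd_lt_nadd_left hb' a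
    · rw [← IHa a' ha']; exact nadd_lt_nadd_right ha' b

@[simp] theorem nadd_zero (a : Ordinal) : a ♯ 0 = a := by
  induction a using Ordinal.induction with
  | _ a IH =>
  apply le_antisymm
  · rw [nadd_le_iff]
    refine ⟨fun a' ha' => by rwa [IH a' ha'], fun c hc => absurd hc zero_le.not_gt⟩
  · apply le_of_forall_lt
    intro x hx
    exact lt_nadd_iff.2 (Or.inl ⟨x, hx, (IH x hx).ge⟩)

@[simp] theorem zero_nadd (a : Ordinal) : 0 ♯ a = a := by rw [nadd_comm, nadd_zero]

theorem nadd_succ (a b : Ordinal) : a ♯ Order.succ b = Order.succ (a ♯ b) := by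
  induction a using Ordinal.induction with
  | _ a IH =>
  apply le_antisymm
  · rw [nadd_le_iff]
    refine ⟨fun a' ha' => ?_, fun b' hb' => ?_⟩
    · rw [IH a' ha', Order.succ_lt_succ_iff]; exact nadd_lt_nadd_right ha' b
    · rw [Order.lt_succ_iff]; exact nadd_le_nadd_left (Order.lt_succ_iff.1 hb') a
  · exact Order.succ_le_of_lt (nadd_lt_nadd_left (Order.lt_succ b) a)

theorem nadd_nat (a : Ordinal) (n : ℕ) : a ♯ (n : Ordinal) = a + n := by
  induction n with
  | zero => simp
  | succ n ih =>
    rw [Nat.cast_succ, add_one_eq_succ, nadd_succ, ih, ← add_one_eq_succ, ← add_one_eq_succ,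
      add_assoc]

theorem add_le_nadd (a b : Ordinal) : a + b ≤ a ♯ b := by
  induction b using Ordinal.induction with
  | _ b IH =>
  rcases eq_or_ne b 0 with rfl | hb
  · simp
  apply le_of_forall_lt
  intro x hx
  obtain ⟨d, hd, hxd⟩ := (Ordinal.lt_add_iff hb).1 hx
  exact hxd.trans_lt ((IH d hd).trans_lt (nadd_lt_nadd_left hd a))

theorem nadd_assoc (a b c : Ordinal) : a ♯ b ♯ c = a ♯ (b ♯ c) := by
  induction a using Ordinal.induction generalizing b c with
  | _ a IHa =>
  induction b using Ordinal.induction generalizing c with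
  | _ b IHb =>
  induction c using Ordinal.induction with
  | _ c IHc =>
  apply le_antisymm
  · rw [nadd_le_iff]
    refine ⟨fun x hx => ?_, fun c' hc' => ?_⟩
    · rcases lt_nadd_iff.1 hx with ⟨a', ha', hle⟩ | ⟨b', hb', hle⟩
      · calc x ♯ c ≤ a' ♯ b ♯ c := nadd_le_nadd_right hle c
          _ = a' ♯ (b ♯ c) := IHa a' ha' b c
          _ < a ♯ (b ♯ c) := nadd_lt_nadd_right ha' _
      · calc x ♯ c ≤ a ♯ b' ♯ c := nadd_le_nadd_right hle c
          _ = a ♯ (b' ♯ c) := IHb b' hb' c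
          _ < a ♯ (b ♯ c) := nadd_lt_nadd_left (nadd_lt_nadd_right hb' c) a
    · rw [IHc c' hc']
      exact nadd_lt_nadd_left (nadd_lt_nadd_left hc' b) a
  · rw [nadd_le_iff]
    refine ⟨fun a' ha' => ?_, fun y hy => ?_⟩
    · rw [← IHa a' ha']
      exact nadd_lt_nadd_right (nadd_lt_nadd_right ha' b) c
    · rcases lt_nadd_iff.1 hy with ⟨b', hb', hle⟩ | ⟨c', hc', hle⟩
      · calc a ♯ y ≤ a ♯ (b' ♯ c) := nadd_le_nadd_left hle a
          _ = a ♯ b' ♯ c := (IHb b' hb' c).symm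
          _ < a ♯ b ♯ c := nadd_lt_nadd_right (nadd_lt_nadd_left hb' a) c
      · calc a ♯ y ≤ a ♯ (b ♯ c') := nadd_le_nadd_left hle a
          _ = a ♯ b ♯ c' := (IHc c' hc').symm
          _ < a ♯ b ♯ c := nadd_lt_nadd_left hc' _

theorem nadd_left_comm (a b c : Ordinal) : a ♯ (b ♯ c) = b ♯ (a ♯ c) := by
  rw [← nadd_assoc, nadd_comm a b, nadd_assoc]

end Ordinal

theorem nadd_small (d : Ordinal) (hP : ∀ p < (ω:Ordinal) ^ d, ∀ q < (ω:Ordinal) ^ d, p ♯ q < (ω:Ordinal) ^ d) :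
    ∀ b y, y < (ω:Ordinal) ^ d → (ω:Ordinal) ^ d * b ♯ y = (ω:Ordinal) ^ d * b + y := by
  intro b
  induction b using Ordinal.induction with
  | _ b IHb =>
  intro y
  induction y using Ordinal.induction with
  | _ y IHy =>
  intro hy
  have hd0 : (ω:Ordinal) ^ d ≠ 0 := opow_ne_zero _ omega0_ne_zero
  refine le_antisymm ?_ (add_le_nadd _ _)
  rw [nadd_le_iff]
  constructor
  · intro x hx
    have hj : x / ω ^ d < b := (Ordinal.div_lt hd0).2 hx
    have hr : x % ω ^ d < ω ^ d := mod_lt _ hd0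
    have hry : x % ω ^ d ♯ y < ω ^ d := hP _ hr _ hy
    calc x ♯ y = (ω ^ d * (x / ω ^ d) + x % ω ^ d) ♯ y := by rw [div_add_mod]
      _ ≤ (ω ^ d * (x / ω ^ d) ♯ x % ω ^ d) ♯ y := nadd_le_nadd_right (add_le_nadd _ _) y
      _ = ω ^ d * (x / ω ^ d) ♯ (x % ω ^ d ♯ y) := nadd_assoc _ _ _
      _ = ω ^ d * (x / ω ^ d) + (x % ω ^ d ♯ y) := IHb _ hj _ hry
      _ < ω ^ d * (x / ω ^ d) + ω ^ d := add_lt_add_right hry _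
      _ = ω ^ d * (x / ω ^ d + 1) := by rw [mul_add_one]
      _ ≤ ω ^ d * b := mul_le_mul_right (by rw [add_one_eq_succ]; exact Order.succ_le_iff.2 hj) _
      _ ≤ ω ^ d * b + y := le_self_add
  · intro y' hy'
    rw [IHy y' hy' (hy'.trans hy)]
    exact add_lt_add_right hy' _

theorem nadd_mul_opow (d : Ordinal) (hP : ∀ p < (ω:Ordinal) ^ d, ∀ q < (ω:Ordinal) ^ d, p ♯ q < (ω:Ordinal) ^ d) :
    ∀ b₁ b₂, (ω:Ordinal) ^ d * b₁ ♯ ω ^ d * b₂ = ω ^ d * (b₁ ♯ b₂) := by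
  have hd0 : (ω:Ordinal) ^ d ≠ 0 := opow_ne_zero _ omega0_ne_zero
  suffices key : ∀ γ b₁ b₂, b₁ ♯ b₂ ≤ γ → (ω:Ordinal) ^ d * b₁ ♯ ω ^ d * b₂ = ω ^ d * (b₁ ♯ b₂) by
    intro b₁ b₂; exact key _ b₁ b₂ le_rfl
  intro γ
  induction γ using Ordinal.induction with
  | _ γ IH =>
  -- first a one-sided bound usable symmetrically
  have main : ∀ b₁ b₂, b₁ ♯ b₂ ≤ γ → ∀ x < (ω:Ordinal) ^ d * b₁,
      x ♯ ω ^ d * b₂ < ω ^ d * (b₁ ♯ b₂) := by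
    intro b₁ b₂ hbγ x hx
    have hj : x / ω ^ d < b₁ := (Ordinal.div_lt hd0).2 hx
    have hr : x % ω ^ d < ω ^ d := mod_lt _ hd0
    have hlt : (x / ω ^ d) ♯ b₂ < b₁ ♯ b₂ := nadd_lt_nadd_right hj _
    calc x ♯ ω ^ d * b₂ = (ω ^ d * (x / ω ^ d) + x % ω ^ d) ♯ ω ^ d * b₂ := by rw [div_add_mod]
      _ ≤ (ω ^ d * (x / ω ^ d) ♯ x % ω ^ d) ♯ ω ^ d * b₂ := nadd_le_nadd_right (add_le_nadd _ _) _
      _ = (ω ^ d * (x / ω ^ d) ♯ ω ^ d * b₂) ♯ x % ω ^ d := by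
          rw [nadd_assoc, nadd_assoc, nadd_comm (x % ω ^ d)]
      _ = ω ^ d * ((x / ω ^ d) ♯ b₂) ♯ x % ω ^ d := by
          rw [IH _ (hlt.trans_le hbγ) _ _ le_rfl]
      _ = ω ^ d * ((x / ω ^ d) ♯ b₂) + x % ω ^ d := nadd_small d hP _ _ hr
      _ < ω ^ d * ((x / ω ^ d) ♯ b₂) + ω ^ d := add_lt_add_right hr _
      _ = ω ^ d * ((x / ω ^ d) ♯ b₂ + 1) := by rw [mul_add_one]
      _ ≤ ω ^ d * (b₁ ♯ b₂) := mul_le_mul_right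
          (by rw [add_one_eq_succ]; exact Order.succ_le_iff.2 hlt) _
  intro b₁ b₂ hbγ
  refine le_antisymm ?_ ?_
  · rw [nadd_le_iff]
    refine ⟨fun x hx => main b₁ b₂ hbγ x hx, fun y hy => ?_⟩
    rw [nadd_comm, nadd_comm b₁ b₂]
    exact main b₂ b₁ (by rwa [nadd_comm]) y hy
  · apply le_of_forall_lt
    intro x hx
    have hj : x / ω ^ d < b₁ ♯ b₂ := (Ordinal.div_lt hd0).2 hx
    have hr : x % ω ^ d < ω ^ d := mod_lt _ hd0
    rcases lt_nadd_iff.1 hj with ⟨b', hb', hle⟩ | ⟨b', hb', hle⟩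
    · have h1 : x ≤ ω ^ d * (b' ♯ b₂) + x % ω ^ d := by
        calc x = ω ^ d * (x / ω ^ d) + x % ω ^ d := (div_add_mod _ _).symm
          _ ≤ ω ^ d * (b' ♯ b₂) + x % ω ^ d := by
              exact add_le_add_left (mul_le_mul_right hle _) _
      have h2 : ω ^ d * (b' ♯ b₂) + x % ω ^ d < ω ^ d * b₁ ♯ ω ^ d * b₂ := by
        calc ω ^ d * (b' ♯ b₂) + x % ω ^ d
            = ω ^ d * (b' ♯ b₂) ♯ x % ω ^ d := (nadd_small d hP _ _ hr).symm
          _ = (ω ^ d * b' ♯ ω ^ d * b₂) ♯ x % ω ^ d := by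
              rw [IH _ ((nadd_lt_nadd_right hb' _).trans_le hbγ) _ _ le_rfl]
          _ = (ω ^ d * b' ♯ x % ω ^ d) ♯ ω ^ d * b₂ := by
              rw [nadd_assoc, nadd_assoc, nadd_comm (x % ω ^ d)]
          _ = (ω ^ d * b' + x % ω ^ d) ♯ ω ^ d * b₂ := by
              rw [nadd_small d hP _ _ hr]
          _ < ω ^ d * b₁ ♯ ω ^ d * b₂ := by
              refine nadd_lt_nadd_right ?_ _
              calc ω ^ d * b' + x % ω ^ d < ω ^ d * b' + ω ^ d := add_lt_add_right hr _
                _ = ω ^ d * (b' + 1) := by rw [mul_add_one]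
                _ ≤ ω ^ d * b₁ := mul_le_mul_right
                    (by rw [add_one_eq_succ]; exact Order.succ_le_iff.2 hb') _
      exact h1.trans_lt h2
    · have h1 : x ≤ ω ^ d * (b₁ ♯ b') + x % ω ^ d := by
        calc x = ω ^ d * (x / ω ^ d) + x % ω ^ d := (div_add_mod _ _).symm
          _ ≤ ω ^ d * (b₁ ♯ b') + x % ω ^ d := by
              exact add_le_add_left (mul_le_mul_right hle _) _
      have h2 : ω ^ d * (b₁ ♯ b') + x % ω ^ d < ω ^ d * b₁ ♯ ω ^ d * b₂ := by
        calc ω ^ d * (b₁ ♯ b') + x % ω ^ d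
            = ω ^ d * (b₁ ♯ b') ♯ x % ω ^ d := (nadd_small d hP _ _ hr).symm
          _ = (ω ^ d * b₁ ♯ ω ^ d * b') ♯ x % ω ^ d := by
              rw [IH _ ((nadd_lt_nadd_left hb' _).trans_le hbγ) _ _ le_rfl]
          _ = ω ^ d * b₁ ♯ (ω ^ d * b' ♯ x % ω ^ d) := nadd_assoc _ _ _
          _ = ω ^ d * b₁ ♯ (ω ^ d * b' + x % ω ^ d) := by
              rw [nadd_small d hP _ _ hr]
          _ < ω ^ d * b₁ ♯ ω ^ d * b₂ := by
              refine nadd_lt_nadd_left ?_ _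
              calc ω ^ d * b' + x % ω ^ d < ω ^ d * b' + ω ^ d := add_lt_add_right hr _
                _ = ω ^ d * (b' + 1) := by rw [mul_add_one]
                _ ≤ ω ^ d * b₂ := mul_le_mul_right
                    (by rw [add_one_eq_succ]; exact Order.succ_le_iff.2 hb') _
      exact h1.trans_lt h2

theorem nadd_lt_opow : ∀ c : Ordinal, ∀ p < (ω:Ordinal) ^ c, ∀ q < (ω:Ordinal) ^ c, p ♯ q < (ω:Ordinal) ^ c := by
  intro c
  induction c using Ordinal.induction with
  | _ c IH =>
  intro p hp q hq
  rcases Ordinal.zero_or_succ_or_isSuccLimit c with rfl | ⟨d, rfl⟩ | hc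
  · rw [opow_zero] at *
    rw [Ordinal.lt_one_iff_zero] at hp hq
    subst hp; subst hq; simp
  · obtain ⟨n, hn⟩ := lt_omega0_opow_succ.1 hp
    obtain ⟨m, hm⟩ := lt_omega0_opow_succ.1 hq
    have hP := IH d (Order.lt_succ d)
    have : p ♯ q < ω ^ d * n ♯ ω ^ d * m := nadd_lt_nadd hn hm
    rw [nadd_mul_opow d hP, nadd_nat] at this
    refine this.trans_le ?_
    have : ((n : Ordinal) + m) = ((n + m : ℕ) : Ordinal) := by push_cast; ring
    rw [this]
    exact (omega0_opow_mul_nat_lt (Order.lt_succ d) _).le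
  · obtain ⟨c₁, hc₁, hp'⟩ := (lt_opow_of_isSuccLimit omega0_ne_zero hc).1 hp
    obtain ⟨c₂, hc₂, hq'⟩ := (lt_opow_of_isSuccLimit omega0_ne_zero hc).1 hq
    have h1 : p < ω ^ max c₁ c₂ := hp'.trans_le (opow_le_opow_right omega0_pos (le_max_left _ _))
    have h2 : q < ω ^ max c₁ c₂ := hq'.trans_le (opow_le_opow_right omega0_pos (le_max_right _ _))
    exact (IH _ (max_lt hc₁ hc₂) p h1 q h2).trans_le
      (opow_le_opow_right omega0_pos (max_lt hc₁ hc₂).le)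

/-- Natural sum of ordinals in "block form". -/

theorem nadd_decomp (e m n r s : Ordinal) (hr : r < (ω:Ordinal) ^ e) (hs : s < (ω:Ordinal) ^ e) :
    ((ω:Ordinal) ^ e * m + r) ♯ (ω ^ e * n + s) = ω ^ e * (m ♯ n) + (r ♯ s) := by
  have hP := nadd_lt_opow e
  calc ((ω:Ordinal) ^ e * m + r) ♯ (ω ^ e * n + s)
      = (ω ^ e * m ♯ r) ♯ (ω ^ e * n ♯ s) := by
        rw [nadd_small e hP m r hr, nadd_small e hP n s hs]
    _ = (ω ^ e * m ♯ ω ^ e * n) ♯ (r ♯ s) := by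
        rw [nadd_assoc, nadd_left_comm r, ← nadd_assoc]
    _ = ω ^ e * (m ♯ n) ♯ (r ♯ s) := by rw [nadd_mul_opow e hP]
    _ = ω ^ e * (m ♯ n) + (r ♯ s) := nadd_small e hP _ _ (hP _ hr _ hs)

/-- The `e`-th coefficient in the base-`ω` Cantor normal form. -/
def mult (e z : Ordinal) : Ordinal := z / (ω:Ordinal) ^ e % ω

theorem mult_zero (e : Ordinal) : mult e 0 = 0 := by simp [mult]

theorem mult_opow_mul_add {e E : Ordinal} (h : e < E) (k t : Ordinal) :
    mult e ((ω:Ordinal) ^ E * k + t) = mult e t := by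
  have hd0 : (ω:Ordinal) ^ e ≠ 0 := opow_ne_zero _ omega0_ne_zero
  have hE : (ω:Ordinal) ^ E = ω ^ e * ω ^ (E - e) := by
    rw [← opow_add, Ordinal.add_sub_cancel_of_le h.le]
  have h1 : (1:Ordinal) ≤ E - e := by
    rw [Order.one_le_iff_pos]; exact Ordinal.lt_sub.2 (by simpa using h)
  have hEe : (ω:Ordinal) ^ (E - e) = ω * ω ^ (E - e - 1) := by
    conv_lhs => rw [← Ordinal.add_sub_cancel_of_le h1, opow_add, opow_one]
  unfold mult
  rw [hE, mul_assoc, mul_add_div _ hd0, hEe, mul_assoc, mul_add_mod_self]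

theorem mult_lt_omega0 (e z : Ordinal) : mult e z < ω := mod_lt _ omega0_ne_zero

theorem opow_le_of_mult_ne_zero {e z : Ordinal} (h : mult e z ≠ 0) : (ω:Ordinal) ^ e ≤ z := by
  by_contra hlt
  rw [not_le] at hlt
  exact h (by simp [mult, div_eq_zero_of_lt hlt])

theorem le_of_mult_ne_zero {e z : Ordinal} (h : mult e z ≠ 0) : e ≤ z :=
  (right_le_opow e one_lt_omega0).trans (opow_le_of_mult_ne_zero h)

theorem mult_opow_self (e : Ordinal) : ∀ {f}, mult f ((ω:Ordinal) ^ e) ≠ 0 → f = e := by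
  intro f h
  rcases lt_trichotomy f e with hf | rfl | hf
  · have := mult_opow_mul_add hf 1 0
    rw [mul_one, add_zero, mult_zero] at this
    exact absurd this h
  · rfl
  · have : (ω:Ordinal) ^ e < ω ^ f := (opow_lt_opow_iff_right one_lt_omega0).2 hf
    exact absurd (by simp [mult, div_eq_zero_of_lt this]) h

/-- Characterization: coefficient via the remainder mod `ω ^ (e+1)`. -/
theorem mult_eq_mod_div (e z : Ordinal) : mult e z = z % (ω:Ordinal) ^ (e + 1) / ω ^ e := by
  have hd0 : (ω:Ordinal) ^ e ≠ 0 := opow_ne_zero _ omega0_ne_zero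
  have hS : (ω:Ordinal) ^ (e + 1) = ω ^ e * ω := by rw [opow_add, opow_one]
  have hdec := div_add_mod z ((ω:Ordinal) ^ (e + 1))
  have hlt : z % (ω:Ordinal) ^ (e + 1) / ω ^ e < ω := by
    rw [Ordinal.div_lt hd0, ← hS]
    exact mod_lt _ (opow_ne_zero _ omega0_ne_zero)
  calc mult e z = (ω ^ (e+1) * (z / ω ^ (e+1)) + z % ω ^ (e+1)) / ω ^ e % ω := by
        unfold mult; rw [hdec]
    _ = (ω ^ e * (ω * (z / ω ^ (e+1))) + z % ω ^ (e+1)) / ω ^ e % ω := by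
        rw [hS, mul_assoc]
    _ = (ω * (z / ω ^ (e+1)) + z % ω ^ (e+1) / ω ^ e) % ω := by
        rw [mul_add_div _ hd0]
    _ = z % ω ^ (e+1) / ω ^ e % ω := by rw [mul_add_mod_self]
    _ = z % ω ^ (e+1) / ω ^ e := mod_eq_of_lt hlt

theorem mult_eq_zero_iff {e z : Ordinal} : mult e z = 0 ↔ z % (ω:Ordinal) ^ (e + 1) < ω ^ e := by
  rw [mult_eq_mod_div]
  constructor
  · intro h
    by_contra hle
    rw [not_lt] at hle
    have := (Ordinal.div_pos (opow_ne_zero e omega0_ne_zero)).2 hle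
    exact absurd h this.ne'
  · exact div_eq_zero_of_lt

theorem mult_nadd : ∀ e a b : Ordinal, mult e (a ♯ b) = mult e a + mult e b := by
  suffices key : ∀ γ a b : Ordinal, a ♯ b = γ → ∀ e, mult e (a ♯ b) = mult e a + mult e b by
    intro e a b; exact key _ a b rfl e
  intro γ
  induction γ using Ordinal.induction with
  | _ γ IH =>
  intro a b hγ e
  rcases eq_or_ne a 0 with rfl | ha
  · simp [mult_zero]
  rcases eq_or_ne b 0 with rfl | hb
  · simp [mult_zero]
  set E := max (log ω a) (log ω b) with hE
  have hωE : (ω:Ordinal) ^ E ≠ 0 := opow_ne_zero _ omega0_ne_zero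
  have haE : a < ω ^ (E + 1) := by
    refine (lt_opow_succ_log_self one_lt_omega0 a).trans_le
      (opow_le_opow_right omega0_pos ?_)
    rw [← add_one_eq_succ]; exact add_le_add_left (le_max_left _ _) 1
  have hbE : b < ω ^ (E + 1) := by
    refine (lt_opow_succ_log_self one_lt_omega0 b).trans_le
      (opow_le_opow_right omega0_pos ?_)
    rw [← add_one_eq_succ]; exact add_le_add_left (le_max_right _ _) 1
  have hSE : (ω:Ordinal) ^ (E + 1) = ω ^ E * ω := by rw [opow_add, opow_one]
  have hm : a / ω ^ E < ω := by rw [Ordinal.div_lt hωE, ← hSE]; exact haE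
  have hn : b / ω ^ E < ω := by rw [Ordinal.div_lt hωE, ← hSE]; exact hbE
  have hr : a % ω ^ E < ω ^ E := mod_lt _ hωE
  have hs : b % ω ^ E < ω ^ E := mod_lt _ hωE
  have hda := div_add_mod a ((ω:Ordinal) ^ E)
  have hdb := div_add_mod b ((ω:Ordinal) ^ E)
  -- the natural sum in block form
  have hmain : a ♯ b = ω ^ E * (a / ω ^ E + b / ω ^ E) + (a % ω ^ E ♯ b % ω ^ E) := by
    conv_lhs => rw [← hda, ← hdb]
    rw [nadd_decomp E _ _ _ _ hr hs]
    obtain ⟨N, hN⟩ := lt_omega0.1 hn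
    rw [hN, nadd_nat]
  have hrs : a % ω ^ E ♯ b % ω ^ E < ω ^ E := nadd_lt_opow E _ hr _ hs
  -- the coefficient sum is at least 1
  have hpos : a / ω ^ E ≠ 0 ∨ b / ω ^ E ≠ 0 := by
    rcases max_cases (log ω a) (log ω b) with ⟨hEa, _⟩ | ⟨hEb, _⟩
    · left
      rw [ne_eq, ← Ordinal.lt_one_iff_zero, not_lt, Order.one_le_iff_pos,
        Ordinal.div_pos hωE, hE, hEa]
      exact opow_log_le_self ω ha
    · right
      rw [ne_eq, ← Ordinal.lt_one_iff_zero, not_lt, Order.one_le_iff_pos,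
        Ordinal.div_pos hωE, hE, hEb]
      exact opow_log_le_self ω hb
  rcases lt_trichotomy e E with he | rfl | he
  · -- low exponent: pass to remainders
    have h1 : mult e (a ♯ b) = mult e (a % ω ^ E ♯ b % ω ^ E) := by
      rw [hmain, mult_opow_mul_add he]
    have h2 : mult e a = mult e (a % ω ^ E) := by
      conv_lhs => rw [← hda]
      rw [mult_opow_mul_add he]
    have h3 : mult e b = mult e (b % ω ^ E) := by
      conv_lhs => rw [← hdb]
      rw [mult_opow_mul_add he]
    have hlt : a % ω ^ E ♯ b % ω ^ E < γ := by
      rw [← hγ, hmain]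
      refine hrs.trans_le ?_
      calc (ω:Ordinal) ^ E ≤ ω ^ E * (a / ω ^ E + b / ω ^ E) := by
            refine le_mul_of_one_le_right zero_le ?_
            rw [Order.one_le_iff_pos, pos_iff_ne_zero]
            intro hz
            rw [Ordinal.add_eq_zero_iff] at hz
            tauto
        _ ≤ _ := le_self_add
    rw [h1, h2, h3, IH _ hlt _ _ rfl e]
  · -- top exponent
    have h1 : mult E (a ♯ b) = a / ω ^ E + b / ω ^ E := by
      rw [hmain]
      unfold mult
      rw [mul_add_div _ hωE, div_eq_zero_of_lt hrs, add_zero, mod_eq_of_lt]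
      obtain ⟨N, hN⟩ := lt_omega0.1 hm
      obtain ⟨M, hM⟩ := lt_omega0.1 hn
      rw [hN, hM, ← Nat.cast_add]
      exact nat_lt_omega0 _
    have h2 : mult E a = a / ω ^ E := by
      unfold mult
      conv_lhs => rw [← hda]
      rw [mul_add_div _ hωE, div_eq_zero_of_lt hr, add_zero, mod_eq_of_lt hm]
    have h3 : mult E b = b / ω ^ E := by
      unfold mult
      conv_lhs => rw [← hdb]
      rw [mul_add_div _ hωE, div_eq_zero_of_lt hs, add_zero, mod_eq_of_lt hn]
    rw [h1, h2, h3]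
  · -- high exponent: everything vanishes
    have hee : (ω:Ordinal) ^ (E + 1) ≤ ω ^ e := by
      apply opow_le_opow_right omega0_pos
      rw [add_one_eq_succ]
      exact Order.succ_le_iff.2 he
    have hab : a ♯ b < ω ^ (E + 1) :=
      nadd_lt_opow _ _ haE _ hbE
    have z1 : mult e (a ♯ b) = 0 := by
      simp [mult, div_eq_zero_of_lt (hab.trans_le hee)]
    have z2 : mult e a = 0 := by simp [mult, div_eq_zero_of_lt (haE.trans_le hee)]
    have z3 : mult e b = 0 := by simp [mult, div_eq_zero_of_lt (hbE.trans_le hee)]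
    rw [z1, z2, z3, add_zero]

/-- Subadditivity of CNF coefficients for ordinary addition (support version). -/
theorem mult_add_ne_zero {e x y : Ordinal} (h : mult e (x + y) ≠ 0) :
    mult e x ≠ 0 ∨ mult e y ≠ 0 := by
  by_contra hc
  push_neg at hc
  obtain ⟨hx, hy⟩ := hc
  rw [mult_eq_zero_iff] at hx hy
  apply h
  rw [mult_eq_zero_iff]
  set Ω := (ω:Ordinal) ^ (e + 1) with hΩ
  have hΩ0 : Ω ≠ 0 := opow_ne_zero _ omega0_ne_zero
  have hee : (ω:Ordinal) ^ e ≤ Ω := opow_le_opow_right omega0_pos le_self_add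
  have hdx := div_add_mod x Ω
  have hdy := div_add_mod y Ω
  rcases eq_or_ne (y / Ω) 0 with hq | hq
  · -- y < Ω
    have hyy : y % Ω = y := by
      have := hdy
      rw [hq, mul_zero, zero_add] at this
      exact this
    have hsum : x % Ω + y < ω ^ e := principal_add_omega0_opow e hx (hyy ▸ hy)
    have hxy : x + y = Ω * (x / Ω) + (x % Ω + y) := by rw [← add_assoc, hdx]
    rw [hxy, mul_add_mod_self, mod_eq_of_lt (hsum.trans_le hee)]
    exact hsum
  · -- y has a nonzero Ω-block
    have h1 : (1:Ordinal) ≤ y / Ω := Ordinal.one_le_iff_ne_zero.2 hq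
    have hsplit : Ω * (y / Ω) = Ω + Ω * (y / Ω - 1) := by
      conv_lhs => rw [← Ordinal.add_sub_cancel_of_le h1]
      rw [mul_add, mul_one]
    have hxΩ : x + Ω = Ω * (x / Ω + 1) := by
      conv_lhs => rw [← hdx, add_assoc]
      rw [add_omega0_opow (by rw [← hΩ] at *; exact mod_lt _ hΩ0), mul_add_one]
    have : x + y = Ω * (x / Ω + 1 + (y / Ω - 1)) + y % Ω := by
      conv_lhs => rw [← hdy, hsplit]
      rw [← add_assoc, ← add_assoc, hxΩ, ← mul_add, add_assoc]
    rw [this, mul_add_mod_self, mod_eq_of_lt (hy.trans_le hee)]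
    exact hy

/-- Reconstruction: if a set contains `0`, is closed under addition and `ω`-powers,
and contains the support of `z`, then it contains `z`. -/
theorem mem_of_mult_subset {S : Set Ordinal} (h0 : (0:Ordinal) ∈ S)
    (hadd : ∀ x ∈ S, ∀ y ∈ S, x + y ∈ S) (hop : ∀ x ∈ S, (ω:Ordinal) ^ x ∈ S) :
    ∀ z, (∀ e, mult e z ≠ 0 → e ∈ S) → z ∈ S := by
  intro z
  induction z using Ordinal.induction with
  | _ z IH =>
  intro hexp
  rcases eq_or_ne z 0 with rfl | hz
  · exact h0
  set l := log ω z with hl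
  have hωl : (ω:Ordinal) ^ l ≠ 0 := opow_ne_zero _ omega0_ne_zero
  have hd := div_add_mod z ((ω:Ordinal) ^ l)
  have hmlt : z / ω ^ l < ω := div_opow_log_lt z one_lt_omega0
  have hmpos : 0 < z / ω ^ l := div_opow_log_pos ω hz
  have hr : z % ω ^ l < ω ^ l := mod_lt _ hωl
  have hmult_l : mult l z = z / ω ^ l := by
    unfold mult; rw [mod_eq_of_lt hmlt]
  have hlS : l ∈ S := hexp l (by rw [hmult_l]; exact hmpos.ne')
  have hωlS : (ω:Ordinal) ^ l ∈ S := hop l hlS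
  -- multiples of ω^l by naturals
  have hmul : ∀ n : ℕ, (ω:Ordinal) ^ l * n ∈ S := by
    intro n
    induction n with
    | zero => simpa using h0
    | succ n ih =>
        have : (ω:Ordinal) ^ l * ((n:Ordinal) + 1) = ω ^ l * n + ω ^ l := by
          rw [mul_add, mul_one]
        rw [Nat.cast_succ, this]
        exact hadd _ ih _ hωlS
  obtain ⟨N, hN⟩ := lt_omega0.1 hmlt
  have hrz : z % ω ^ l < z := hr.trans_le (opow_log_le_self ω hz)
  have hrS : z % ω ^ l ∈ S := by
    refine IH _ hrz fun e he => ?_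
    have hle : (ω:Ordinal) ^ e ≤ z % ω ^ l := by
      by_contra hlt
      rw [not_le] at hlt
      exact he (by simp [mult, div_eq_zero_of_lt hlt])
    have hel : e < l := by
      have : (ω:Ordinal) ^ e < ω ^ l := hle.trans_lt hr
      exact (opow_lt_opow_iff_right one_lt_omega0).1 this
    have hmz : mult e z = mult e (z % ω ^ l) := by
      conv_lhs => rw [← hd]
      rw [mult_opow_mul_add hel]
    exact hexp e (by rw [hmz]; exact he)
  have : z = ω ^ l * N + z % ω ^ l := by rw [← hN, hd]
  rw [this]
  exact hadd _ (hmul N) _ hrS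

theorem card_opow_omega0 : ∀ x : Ordinal, (ω ^ x).card ≤ max Cardinal.aleph0 x.card := by
  intro x
  induction x using Ordinal.limitRecOn with
  | zero => simp
  | add_one x IH =>
      rw [opow_add_one, Ordinal.card_mul, card_omega0]
      calc (ω ^ x).card * Cardinal.aleph0
          ≤ (max Cardinal.aleph0 x.card) * Cardinal.aleph0 := by
            exact mul_le_mul_left IH _
        _ = max Cardinal.aleph0 x.card := Cardinal.mul_aleph0_eq (le_max_left _ _)
        _ ≤ max Cardinal.aleph0 (Order.succ x).card := by
            exact max_le_max le_rfl (card_le_card (Order.le_succ x))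
  | limit x hx IH =>
      set c := Order.succ (max Cardinal.aleph0 x.card) with hc
      have hreg : c.IsRegular := Cardinal.isRegular_succ (le_max_left _ _)
      have hbound : ω ^ x < c.ord := by
        have hc0 : Cardinal.aleph0 < c := Order.lt_succ_iff.2 (le_max_left _ _)
        refine Ordinal.isPrincipal_opow_ord hc0.le ?_ ?_
        · rw [← Cardinal.ord_aleph0]; exact Cardinal.ord_lt_ord.2 hc0
        · rw [Cardinal.lt_ord]; exact Order.lt_succ_iff.2 (le_max_right _ _)
      have := Cardinal.lt_ord.1 hbound
      exact Order.lt_succ_iff.1 this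

theorem opow_lt_ord {κ : Cardinal} (hκ : Cardinal.aleph0 < κ) :
    ∀ x < κ.ord, (ω:Ordinal) ^ x < κ.ord := by
  intro x hx
  rw [Cardinal.lt_ord] at hx ⊢
  exact (card_opow_omega0 x).trans_lt (max_lt hκ hx)

theorem opow_ord_eq {κ : Cardinal} (hκ : Cardinal.aleph0 < κ) : (ω:Ordinal) ^ κ.ord = κ.ord := by
  refine le_antisymm ?_ (right_le_opow _ one_lt_omega0)
  rw [opow_le_of_isSuccLimit omega0_ne_zero (Cardinal.isSuccLimit_ord hκ.le)]
  exact fun y hy => (opow_lt_ord hκ y hy).le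

def Fam (α : Ordinal) (X : Set Ordinal) : Set (Set Ordinal) :=
  {Y : Set Ordinal | X ∪ {0, I} ⊆ Y ∧
      (∀ γ ∈ Y, ∀ δ ∈ Y, γ + δ ∈ Y) ∧
      (∀ γ ∈ Y, Ordinal.omega0 ^ γ ∈ Y) ∧
      (∀ γ ∈ Y, Om γ ∈ Y) ∧
      (∀ σ ∈ R, ∀ β ∈ Y, β < α → σ ∈ Y → psiOf (H β) σ ∈ Y)}

theorem H_eq (α : Ordinal) (X : Set Ordinal) : H α X = ⋂₀ Fam α X := by
  rw [H]; rfl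

theorem H_subset_of_mem {α X Y} (hY : Y ∈ Fam α X) : H α X ⊆ Y := by
  rw [H_eq]; exact sInter_subset_of_mem hY

theorem subset_H (α : Ordinal) (X : Set Ordinal) : X ∪ {0, I} ⊆ H α X := by
  rw [H_eq]
  intro x hx Y hY
  exact hY.1 hx

theorem zero_mem_H (α X) : (0:Ordinal) ∈ H α X := subset_H α X (Or.inr (Or.inl rfl))
theorem I_mem_H (α X) : I ∈ H α X := subset_H α X (Or.inr (Or.inr rfl))

theorem H_mem_Fam (α : Ordinal) (X : Set Ordinal) : H α X ∈ Fam α X := by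
  refine ⟨subset_H α X, ?_, ?_, ?_, ?_⟩
  · intro γ hγ δ hδ
    rw [H_eq] at *
    intro Y hY
    exact hY.2.1 γ (hγ Y hY) δ (hδ Y hY)
  · intro γ hγ
    rw [H_eq] at *
    intro Y hY
    exact hY.2.2.1 γ (hγ Y hY)
  · intro γ hγ
    rw [H_eq] at *
    intro Y hY
    exact hY.2.2.2.1 γ (hγ Y hY)
  · intro σ hσ β hβ hβα hσ2
    rw [H_eq] at *
    intro Y hY
    exact hY.2.2.2.2 σ hσ β (hβ Y hY) hβα (hσ2 Y hY)

theorem add_mem_H {α X γ δ} (hγ : γ ∈ H α X) (hδ : δ ∈ H α X) : γ + δ ∈ H α X :=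
  (H_mem_Fam α X).2.1 γ hγ δ hδ
theorem opow_mem_H {α X γ} (hγ : γ ∈ H α X) : (ω:Ordinal) ^ γ ∈ H α X :=
  (H_mem_Fam α X).2.2.1 γ hγ
theorem Om_mem_H {α X γ} (hγ : γ ∈ H α X) : Om γ ∈ H α X :=
  (H_mem_Fam α X).2.2.2.1 γ hγ
theorem psiOf_mem_H {α X σ β} (hσ : σ ∈ R) (hβ : β ∈ H α X) (hβα : β < α)
    (hσ2 : σ ∈ H α X) : psiOf (H β) σ ∈ H α X :=
  (H_mem_Fam α X).2.2.2.2 σ hσ β hβ hβα hσ2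


theorem eq_of_mult_eps {z e : Ordinal} (hz : (ω:Ordinal) ^ z = z) (he : mult e z ≠ 0) : e = z :=
  mult_opow_self z (by rw [hz]; exact he)

theorem I_cases : (∃ κ : Cardinal.{u}, Cardinal.aleph0.{u} < κ ∧ I.{u} = κ.ord) ∨ I.{u} = 0 := by
  rw [I]
  rcases Set.eq_empty_or_nonempty {c : Cardinal.{u} | WeaklyInaccessible c} with hW | hW
  · right
    rw [hW, Cardinal.sInf_empty]
    exact Cardinal.ord_zero
  · left
    have h : WeaklyInaccessible (sInf {c : Cardinal | WeaklyInaccessible c}) := csInf_mem hW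
    exact ⟨_, h.1, rfl⟩

theorem Om_ord {γ : Ordinal} (hγ : γ ≠ 0) :
    ∃ κ : Cardinal, Cardinal.aleph0 < κ ∧ Om γ = κ.ord := by
  refine ⟨Cardinal.aleph γ, ?_, by rw [Om, if_neg hγ]⟩
  rw [← Cardinal.aleph_zero]
  exact Cardinal.aleph_lt_aleph.2 (pos_iff_ne_zero.2 hγ)

theorem R_cases {σ : Ordinal} (hσ : σ ∈ R) :
    (∃ κ : Cardinal, Cardinal.aleph0 < κ ∧ σ = κ.ord) ∨ σ = 0 := by
  rcases hσ with ⟨μ, _, rfl⟩ | rfl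
  · left
    exact Om_ord (by rw [add_one_eq_succ]; exact (Order.succ_ne_bot μ))
  · exact I_cases

theorem psiOf_eps {b σ : Ordinal} (hσ : σ ∈ R) :
    psiOf (H b) σ = 0 ∨ (ω:Ordinal) ^ psiOf (H b) σ = psiOf (H b) σ := by
  rcases R_cases hσ with ⟨κ, hκ, rfl⟩ | rfl
  · rw [psiOf]
    set T := {β | β < κ.ord ∧ κ.ord ∈ H b (Set.Iio β) ∧
      H b (Set.Iio β) ∩ Set.Iio κ.ord ⊆ Set.Iio β} ∪ {κ.ord} with hT
    have hne : T.Nonempty := ⟨κ.ord, Or.inr rfl⟩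
    have hmem : sInf T ∈ T := csInf_mem hne
    set ψ := sInf T with hψ
    rcases hmem with ⟨hlt, hσH, hsub⟩ | hψσ
    · rcases eq_or_ne ψ 0 with h0 | h0
      · exact Or.inl h0
      right
      have hωcl : ∀ x < ψ, (ω:Ordinal) ^ x < ψ := by
        intro x hx
        have hxH : x ∈ H b (Set.Iio ψ) := subset_H _ _ (Or.inl hx)
        have hox : (ω:Ordinal) ^ x ∈ H b (Set.Iio ψ) := opow_mem_H hxH
        have hoxlt : (ω:Ordinal) ^ x < κ.ord := opow_lt_ord hκ x (hx.trans hlt)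
        exact hsub ⟨hox, hoxlt⟩
      have haddcl : ∀ x < ψ, ∀ y < ψ, x + y < ψ := by
        intro x hx y hy
        have hxy : x + y ∈ H b (Set.Iio ψ) :=
          add_mem_H (subset_H _ _ (Or.inl hx)) (subset_H _ _ (Or.inl hy))
        have : x + y < κ.ord :=
          Ordinal.isPrincipal_add_ord hκ.le (hx.trans hlt) (hy.trans hlt)
        exact hsub ⟨hxy, this⟩
      have h1 : (1:Ordinal) < ψ := by
        have := hωcl 0 (pos_iff_ne_zero.2 h0)
        rwa [opow_zero] at this
      have hlim : Order.IsSuccLimit ψ :=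
        Ordinal.isSuccLimit_of_isPrincipal_add h1 fun {x y} hx hy => haddcl x hx y hy
      refine le_antisymm ?_ (right_le_opow _ one_lt_omega0)
      rw [opow_le_of_isSuccLimit omega0_ne_zero hlim]
      exact fun x hx => (hωcl x hx).le
    · rw [Set.mem_singleton_iff] at hψσ
      rw [hψσ]
      exact Or.inr (opow_ord_eq hκ)
  · left
    rw [psiOf]
    have : {β | β < (0:Ordinal) ∧ (0:Ordinal) ∈ H b (Set.Iio β) ∧
        H b (Set.Iio β) ∩ Set.Iio 0 ⊆ Set.Iio β} ∪ {(0:Ordinal)} = {0} := by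
      ext x
      simp only [Set.mem_union, Set.mem_setOf_eq, Set.mem_singleton_iff]
      constructor
      · rintro (⟨hx, _⟩ | h)
        · exact absurd hx zero_le.not_gt
        · exact h
      · intro h; exact Or.inr h
    rw [this, csInf_singleton]

theorem mult_mem_H (α β : Ordinal) :
    ∀ z ∈ H α (Set.Iio β), ∀ e, mult e z ≠ 0 → e ∈ H α (Set.Iio β) := by
  have hY : {z | z ∈ H α (Set.Iio β) ∧ ∀ e, mult e z ≠ 0 → e ∈ H α (Set.Iio β)}
      ∈ Fam α (Set.Iio β) := by
    refine ⟨?_, ?_, ?_, ?_, ?_⟩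
    · intro x hx
      rcases hx with hx | hx
      · exact ⟨subset_H _ _ (Or.inl hx), fun e he =>
          subset_H _ _ (Or.inl (lt_of_le_of_lt (le_of_mult_ne_zero he) hx))⟩
      · rcases hx with rfl | hx
        · exact ⟨zero_mem_H _ _, fun e he => absurd (mult_zero e) he⟩
        · rw [Set.mem_singleton_iff] at hx
          subst hx
          refine ⟨I_mem_H _ _, fun e he => ?_⟩
          rcases I_cases with ⟨κ, hκ, hI⟩ | hI
          · have : e = I := eq_of_mult_eps (by rw [hI]; exact opow_ord_eq hκ) he
            rw [this]; exact I_mem_H _ _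
          · rw [hI] at he
            exact absurd (mult_zero e) he
    · rintro γ ⟨hγS, hγe⟩ δ ⟨hδS, hδe⟩
      refine ⟨add_mem_H hγS hδS, fun e he => ?_⟩
      rcases mult_add_ne_zero he with h | h
      · exact hγe e h
      · exact hδe e h
    · rintro γ ⟨hγS, _⟩
      refine ⟨opow_mem_H hγS, fun e he => ?_⟩
      have : e = γ := mult_opow_self γ he
      rw [this]; exact hγS
    · rintro γ ⟨hγS, _⟩
      refine ⟨Om_mem_H hγS, fun e he => ?_⟩
      rcases eq_or_ne γ 0 with rfl | hγ0
      · rw [show Om 0 = 0 from if_pos rfl] at he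
        exact absurd (mult_zero e) he
      · obtain ⟨κ, hκ, hOm⟩ := Om_ord hγ0
        have : e = Om γ := eq_of_mult_eps (by rw [hOm]; exact opow_ord_eq hκ) he
        rw [this]; exact Om_mem_H hγS
    · rintro σ hσR b ⟨hbS, _⟩ hbα ⟨hσS, _⟩
      refine ⟨psiOf_mem_H hσR hbS hbα hσS, fun e he => ?_⟩
      rcases psiOf_eps (b := b) hσR with h0 | heps
      · rw [h0] at he
        exact absurd (mult_zero e) he
      · have : e = psiOf (H b) σ := eq_of_mult_eps heps he
        rw [this]
        exact psiOf_mem_H hσR hbS hbα hσS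
  exact fun z hz => (H_subset_of_mem hY hz).2


theorem stmt10 (hex : ∃ c : Cardinal, WeaklyInaccessible c)
    (δ₀ δ₁ η α : Ordinal) (h : llr η δ₀ δ₁) : llr η (δ₀ ♯ α) (δ₁ ♯ α) := by
  obtain ⟨hlt, hmem⟩ := h
  refine ⟨nadd_lt_nadd_right hlt α, ?_⟩
  intro σ hσ β hδ₁ hη
  have hgen := mult_mem_H β (psi σ β)
  have h0 : (0:Ordinal) ∈ H β (Set.Iio (psi σ β)) := zero_mem_H _ _
  have hadd : ∀ x ∈ H β (Set.Iio (psi σ β)), ∀ y ∈ H β (Set.Iio (psi σ β)),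
      x + y ∈ H β (Set.Iio (psi σ β)) := fun x hx y hy => add_mem_H hx hy
  have hop : ∀ x ∈ H β (Set.Iio (psi σ β)), (ω:Ordinal) ^ x ∈ H β (Set.Iio (psi σ β)) :=
    fun x hx => opow_mem_H hx
  have hexp1 := hgen _ hδ₁
  have hδ₁exp : ∀ e, mult e δ₁ ≠ 0 → e ∈ H β (Set.Iio (psi σ β)) := by
    intro e he
    refine hexp1 e ?_
    rw [mult_nadd]
    intro hz
    rw [Ordinal.add_eq_zero_iff] at hz
    exact he hz.1
  have hαexp : ∀ e, mult e α ≠ 0 → e ∈ H β (Set.Iio (psi σ β)) := by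
    intro e he
    refine hexp1 e ?_
    rw [mult_nadd]
    intro hz
    rw [Ordinal.add_eq_zero_iff] at hz
    exact he hz.2
  have hδ₁S : δ₁ ∈ H β (Set.Iio (psi σ β)) := mem_of_mult_subset h0 hadd hop δ₁ hδ₁exp
  have hδ₀S : δ₀ ∈ H β (Set.Iio (psi σ β)) := hmem σ hσ β hδ₁S hη
  refine mem_of_mult_subset h0 hadd hop _ ?_
  intro e he
  rw [mult_nadd] at he
  rcases eq_or_ne (mult e δ₀) 0 with h1 | h1
  · rw [h1, zero_add] at he
    exact hαexp e he
  · exact hgen _ hδ₀S e h1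

end
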